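/- Let d ∈ ℕ with d ≥ 1 and let p ≥ 2 be a real number. There exists a constant K > 0, depending only on p, such that for all y₁, y₂ ∈ ℝ^d: ‖y₁ + y₂‖^p − ‖y₁‖^p − p ‖y₁‖^{p−2} ⟨y₁, y₂⟩ ≤ K ∫₀¹ ‖y₁ + q y₂‖^{p−2} ‖y₂‖² dq, where the integral is the Lebesgue integral in q over [0, 1]. -/

import Mathlib

open Real intervalIntegral Filter

section aux
variable {E : Type*} [NormedAddCommGroup E] [InnerProductSpace ℝ E]

private lemma sq_rpow_half (x : ℝ) (hx : 0 ≤ x) (r : ℝ) :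
    (x ^ 2) ^ (r / 2) = x ^ r := by
  rw [← Real.rpow_natCast x 2, ← Real.rpow_mul hx]
  congr 1
  push_cast; ring

private lemma hasDerivAt_affine (y₁ y₂ : E) (q : ℝ) :
    HasDerivAt (fun t : ℝ => y₁ + t • y₂) y₂ q := by
  simpa using ((hasDerivAt_id q).smul_const y₂).const_add y₁

private lemma hasDerivAt_U (y₁ y₂ : E) (q : ℝ) :
    HasDerivAt (fun t : ℝ => (inner ℝ (y₁ + t • y₂) (y₁ + t • y₂) : ℝ))
      (2 * (inner ℝ (y₁ + q • y₂) y₂ : ℝ)) q := by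
  have := (hasDerivAt_affine y₁ y₂ q).inner ℝ (hasDerivAt_affine y₁ y₂ q)
  refine this.congr_deriv ?_
  rw [real_inner_comm]; ring

private lemma hasDerivAt_V (y₁ y₂ : E) (q : ℝ) :
    HasDerivAt (fun t : ℝ => (inner ℝ (y₁ + t • y₂) y₂ : ℝ)) (‖y₂‖ ^ 2) q := by
  have := (hasDerivAt_affine y₁ y₂ q).inner ℝ (hasDerivAt_const q y₂)
  simpa [real_inner_self_eq_norm_sq] using this

/-- derivative of `g` -/
private lemma hasDerivAt_g (p : ℝ) (hp : 2 ≤ p) (y₁ y₂ : E) (q : ℝ) :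
    HasDerivAt (fun t : ℝ => ‖y₁ + t • y₂‖ ^ p)
      (p * ‖y₁ + q • y₂‖ ^ (p - 2) * (inner ℝ (y₁ + q • y₂) y₂ : ℝ)) q := by
  have hu := hasDerivAt_U y₁ y₂ q
  have hr : HasDerivAt (fun x : ℝ => x ^ (p / 2))
      ((p / 2) * (inner ℝ (y₁ + q • y₂) (y₁ + q • y₂) : ℝ) ^ (p / 2 - 1))
      ((inner ℝ (y₁ + q • y₂) (y₁ + q • y₂) : ℝ)) :=
    Real.hasDerivAt_rpow_const (Or.inr (by linarith))
  have hc := hr.comp q hu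
  have hfun : (fun t : ℝ => ‖y₁ + t • y₂‖ ^ p)
      = fun t : ℝ => (inner ℝ (y₁ + t • y₂) (y₁ + t • y₂) : ℝ) ^ (p / 2) := by
    funext t
    rw [real_inner_self_eq_norm_sq, sq_rpow_half _ (norm_nonneg _)]
  rw [hfun]
  refine hc.congr_deriv ?_
  · rw [real_inner_self_eq_norm_sq]
    have h2 : (p / 2 - 1) = (p - 2) / 2 := by ring
    rw [h2, sq_rpow_half _ (norm_nonneg _)]
    ring

/-- derivative of `h` with the key bound -/
private lemma hasDerivAt_h (p : ℝ) (hp : 2 ≤ p) (y₁ y₂ : E) (q : ℝ) :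
    ∃ D, HasDerivAt
        (fun t : ℝ => p * ‖y₁ + t • y₂‖ ^ (p - 2) * (inner ℝ (y₁ + t • y₂) y₂ : ℝ)) D q ∧
      D ≤ p * (p - 1) * (‖y₁ + q • y₂‖ ^ (p - 2) * ‖y₂‖ ^ 2) := by
  rcases eq_or_lt_of_le hp with hp2 | hp2
  · -- p = 2
    refine ⟨p * 1 * ‖y₂‖ ^ 2, ?_, ?_⟩
    · have h2 : (fun t : ℝ => p * ‖y₁ + t • y₂‖ ^ (p - 2) * (inner ℝ (y₁ + t • y₂) y₂ : ℝ))
          = fun t : ℝ => p * 1 * (inner ℝ (y₁ + t • y₂) y₂ : ℝ) := by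
        funext t; rw [← hp2]; norm_num
      rw [h2]
      exact ((hasDerivAt_V y₁ y₂ q).const_mul _)
    · rw [← hp2]; norm_num
  · -- p > 2
    by_cases haq : y₁ + q • y₂ = 0
    · -- degenerate point: derivative is 0
      refine ⟨0, ?_, ?_⟩
      swap
      · have hA := Real.rpow_nonneg (norm_nonneg (y₁ + q • y₂)) (p - 2)
        have hB := sq_nonneg ‖y₂‖
        have hpp : (0:ℝ) ≤ p * (p - 1) := by nlinarith
        exact mul_nonneg hpp (mul_nonneg hA hB)
      have hy1 : y₁ = -(q • y₂) := eq_neg_of_add_eq_zero_left haq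
      have haff : ∀ t : ℝ, y₁ + t • y₂ = (t - q) • y₂ := by
        intro t; rw [hy1, sub_smul]; abel
      set c : ℝ := p * ‖y₂‖ ^ (p - 2) * ‖y₂‖ ^ 2 with hc
      have hval : ∀ t : ℝ, p * ‖y₁ + t • y₂‖ ^ (p - 2) * (inner ℝ (y₁ + t • y₂) y₂ : ℝ)
          = c * (|t - q| ^ (p - 2) * (t - q)) := by
        intro t
        rw [haff t, real_inner_smul_left, real_inner_self_eq_norm_sq, norm_smul,
          Real.norm_eq_abs, Real.mul_rpow (abs_nonneg _) (norm_nonneg _)]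
        ring
      rw [hasDerivAt_iff_tendsto_slope]
      have heq : ∀ t ∈ ({q}ᶜ : Set ℝ),
          ‖slope (fun t : ℝ => p * ‖y₁ + t • y₂‖ ^ (p - 2) * (inner ℝ (y₁ + t • y₂) y₂ : ℝ)) q t‖
            ≤ |c| * |t - q| ^ (p - 2) := by
        intro t ht
        have htq : t - q ≠ 0 := sub_ne_zero.mpr ht
        rw [slope_def_field, hval t, hval q]
        simp only [sub_self, abs_zero, mul_zero, sub_zero]
        rw [mul_div_assoc, mul_div_cancel_right₀ _ htq, Real.norm_eq_abs, abs_mul,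
          abs_of_nonneg (Real.rpow_nonneg (abs_nonneg _) _)]
      have htend : Tendsto (fun t : ℝ => |c| * |t - q| ^ (p - 2)) (nhdsWithin q ({q}ᶜ)) (nhds 0) := by
        have h1 : Tendsto (fun t : ℝ => |t - q|) (nhdsWithin q ({q}ᶜ)) (nhds 0) := by
          apply tendsto_nhdsWithin_of_tendsto_nhds
          have : Continuous fun t : ℝ => |t - q| := by continuity
          simpa using this.tendsto q
        have h2 : Tendsto (fun t : ℝ => |t - q| ^ (p - 2)) (nhdsWithin q ({q}ᶜ)) (nhds 0) := by
          have hcont := Real.continuousAt_rpow_const 0 (p - 2) (Or.inr (by linarith))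
          have := hcont.tendsto.comp h1
          simpa [Function.comp_def, Real.zero_rpow (by linarith : p - 2 ≠ 0)] using this
        simpa using h2.const_mul |c|
      exact squeeze_zero_norm' (eventually_nhdsWithin_of_forall heq) htend
    · -- a q ≠ 0
      have hu_pos : (0:ℝ) < (inner ℝ (y₁ + q • y₂) (y₁ + q • y₂) : ℝ) := by
        rw [real_inner_self_eq_norm_sq]
        exact pow_pos (norm_pos_iff.mpr haq) 2
      have hu := hasDerivAt_U y₁ y₂ q
      have hw : HasDerivAt
          (fun t : ℝ => (inner ℝ (y₁ + t • y₂) (y₁ + t • y₂) : ℝ) ^ ((p - 2) / 2))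
          (((p - 2) / 2) * (inner ℝ (y₁ + q • y₂) (y₁ + q • y₂) : ℝ) ^ ((p - 2) / 2 - 1)
            * (2 * (inner ℝ (y₁ + q • y₂) y₂ : ℝ))) q :=
        by
          have hr2 : HasDerivAt (fun x : ℝ => x ^ ((p - 2) / 2))
              (((p - 2) / 2) * (inner ℝ (y₁ + q • y₂) (y₁ + q • y₂) : ℝ) ^ ((p - 2) / 2 - 1))
              ((inner ℝ (y₁ + q • y₂) (y₁ + q • y₂) : ℝ)) :=
            Real.hasDerivAt_rpow_const (Or.inl hu_pos.ne')
          exact hr2.comp q hu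
      have hv := hasDerivAt_V y₁ y₂ q
      have hprod := (hw.mul hv).const_mul p
      set u : ℝ := (inner ℝ (y₁ + q • y₂) (y₁ + q • y₂) : ℝ) with hudef
      set w : ℝ := (inner ℝ (y₁ + q • y₂) y₂ : ℝ) with hwdef
      refine ⟨p * ((((p - 2) / 2) * u ^ ((p - 2) / 2 - 1) * (2 * w))
          * w + u ^ ((p - 2) / 2) * ‖y₂‖ ^ 2), ?_, ?_⟩
      · have h2 : (fun t : ℝ => p * ‖y₁ + t • y₂‖ ^ (p - 2) * (inner ℝ (y₁ + t • y₂) y₂ : ℝ))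
            = fun t : ℝ => p * ((inner ℝ (y₁ + t • y₂) (y₁ + t • y₂) : ℝ) ^ ((p - 2) / 2)
              * (inner ℝ (y₁ + t • y₂) y₂ : ℝ)) := by
          funext t
          rw [real_inner_self_eq_norm_sq, sq_rpow_half _ (norm_nonneg _)]
          ring
        rw [h2]
        exact hprod
      · -- the bound
        have hnorm : ‖y₁ + q • y₂‖ ^ (p - 2) = u ^ ((p - 2) / 2) := by
          rw [hudef, real_inner_self_eq_norm_sq, sq_rpow_half _ (norm_nonneg _)]
        rw [hnorm]
        have hcs : w * w ≤ u * ‖y₂‖ ^ 2 := by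
          have := real_inner_mul_inner_self_le (y₁ + q • y₂) y₂
          rwa [real_inner_self_eq_norm_sq y₂] at this
        have hru : u ^ ((p - 2) / 2 - 1) * u = u ^ ((p - 2) / 2) := by
          nth_rewrite 2 [← Real.rpow_one u]
          rw [← Real.rpow_add hu_pos]
          congr 1; ring
        have hB : (0:ℝ) ≤ u ^ ((p - 2) / 2 - 1) := Real.rpow_nonneg hu_pos.le _
        have hA : (0:ℝ) ≤ u ^ ((p - 2) / 2) := Real.rpow_nonneg hu_pos.le _
        have h1 : u ^ ((p - 2) / 2 - 1) * (w * w) ≤ u ^ ((p - 2) / 2) * ‖y₂‖ ^ 2 := by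
          calc u ^ ((p - 2) / 2 - 1) * (w * w)
              ≤ u ^ ((p - 2) / 2 - 1) * (u * ‖y₂‖ ^ 2) := mul_le_mul_of_nonneg_left hcs hB
            _ = u ^ ((p - 2) / 2) * ‖y₂‖ ^ 2 := by rw [← hru]; ring
        have h2 := mul_le_mul_of_nonneg_left h1 (by nlinarith : (0:ℝ) ≤ p * (p - 2))
        nlinarith [h2]

end aux

/-- Taylor remainder estimate for the map `y ↦ ‖y‖^p`, `p ≥ 2`:
`‖y₁+y₂‖^p − ‖y₁‖^p − p‖y₁‖^{p−2}⟨y₁,y₂⟩ ≤ K ∫₀¹ ‖y₁ + q y₂‖^{p−2} ‖y₂‖² dq`. -/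
theorem stmt_11 (d : ℕ) (hd : 1 ≤ d) (p : ℝ) (hp : 2 ≤ p) :
    ∃ K > 0, ∀ y₁ y₂ : EuclideanSpace ℝ (Fin d),
      ‖y₁ + y₂‖ ^ p - ‖y₁‖ ^ p - p * ‖y₁‖ ^ (p - 2) * (inner ℝ y₁ y₂ : ℝ) ≤
        K * ∫ q in (0:ℝ)..1, ‖y₁ + q • y₂‖ ^ (p - 2) * ‖y₂‖ ^ 2 := by
  refine ⟨p * (p - 1), by nlinarith, fun y₁ y₂ => ?_⟩
  set h : ℝ → ℝ := fun t => p * ‖y₁ + t • y₂‖ ^ (p - 2) * (inner ℝ (y₁ + t • y₂) y₂ : ℝ) with hhdef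
  set b : ℝ → ℝ := fun t => p * (p - 1) * (‖y₁ + t • y₂‖ ^ (p - 2) * ‖y₂‖ ^ 2) with hbdef
  have haff_cont : Continuous fun t : ℝ => y₁ + t • y₂ := by continuity
  have hnc : Continuous fun t : ℝ => ‖y₁ + t • y₂‖ ^ (p - 2) :=
    (haff_cont.norm).rpow_const (fun x => Or.inr (by linarith))
  have hb_cont : Continuous b := by
    apply Continuous.mul continuous_const
    exact hnc.mul continuous_const
  have hh_cont : Continuous h := by
    apply Continuous.mul (Continuous.mul continuous_const hnc)
    exact haff_cont.inner continuous_const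
  have hb_nonneg : ∀ t : ℝ, 0 ≤ b t := by
    intro t
    have hA := Real.rpow_nonneg (norm_nonneg (y₁ + t • y₂)) (p - 2)
    have hB := sq_nonneg ‖y₂‖
    simp only [hbdef]
    have hpp : (0:ℝ) ≤ p * (p - 1) := by nlinarith
    exact mul_nonneg hpp (mul_nonneg hA hB)
  choose D hD hDle using fun q => hasDerivAt_h p hp y₁ y₂ q
  set φ : ℝ → ℝ := fun r => ∫ s in (0:ℝ)..r, b s with hφdef
  have hφ : ∀ r : ℝ, HasDerivAt φ (b r) r := fun r =>
    intervalIntegral.integral_hasDerivAt_right (hb_cont.intervalIntegrable _ _)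
      (hb_cont.stronglyMeasurableAtFilter _ _) hb_cont.continuousAt
  have hmono : Monotone fun r => φ r - h r := by
    apply monotone_of_deriv_nonneg
    · exact fun r => ((hφ r).sub (hD r)).differentiableAt
    · intro r
      rw [show deriv (fun r => φ r - h r) r = b r - D r from ((hφ r).sub (hD r)).deriv]
      have h3 := hDle r
      simp only [hbdef]
      linarith
  have key : ∀ r ∈ Set.Icc (0:ℝ) 1, h r - h 0 ≤ φ 1 := by
    intro r hr
    have h1 : φ 0 - h 0 ≤ φ r - h r := hmono hr.1
    have hφ0 : φ 0 = 0 := intervalIntegral.integral_same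
    have h2 : φ r ≤ φ 1 := by
      have hadd : φ r + ∫ s in r..1, b s = φ 1 :=
        intervalIntegral.integral_add_adjacent_intervals (hb_cont.intervalIntegrable _ _)
          (hb_cont.intervalIntegrable _ _)
      have hpos : 0 ≤ ∫ s in r..1, b s :=
        intervalIntegral.integral_nonneg hr.2 (fun x _ => hb_nonneg x)
      linarith
    rw [hφ0] at h1
    linarith
  have hgderiv : ∀ x ∈ Set.uIcc (0:ℝ) 1, HasDerivAt (fun t : ℝ => ‖y₁ + t • y₂‖ ^ p) (h x) x :=
    fun x _ => hasDerivAt_g p hp y₁ y₂ x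
  have hFTC : ∫ t in (0:ℝ)..1, h t = ‖y₁ + (1:ℝ) • y₂‖ ^ p - ‖y₁ + (0:ℝ) • y₂‖ ^ p :=
    intervalIntegral.integral_eq_sub_of_hasDerivAt hgderiv (hh_cont.intervalIntegrable 0 1)
  have hsub : ∫ t in (0:ℝ)..1, (h t - h 0) = (∫ t in (0:ℝ)..1, h t) - h 0 := by
    rw [intervalIntegral.integral_sub (hh_cont.intervalIntegrable 0 1)
      (intervalIntegrable_const)]
    simp only [intervalIntegral.integral_const, sub_zero, one_smul, smul_eq_mul, one_mul]
  have hmono2 : ∫ t in (0:ℝ)..1, (h t - h 0) ≤ ∫ _t in (0:ℝ)..1, φ 1 := by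
    apply intervalIntegral.integral_mono_on (by norm_num)
      ((hh_cont.sub continuous_const).intervalIntegrable 0 1) intervalIntegrable_const
    exact key
  have hconst : ∫ _t in (0:ℝ)..1, φ 1 = φ 1 := by simp
  have hφ1 : φ 1 = p * (p - 1) * ∫ q in (0:ℝ)..1, ‖y₁ + q • y₂‖ ^ (p - 2) * ‖y₂‖ ^ 2 := by
    rw [hφdef]
    exact intervalIntegral.integral_const_mul _ _
  have h0val : h 0 = p * ‖y₁‖ ^ (p - 2) * (inner ℝ y₁ y₂ : ℝ) := by
    simp only [hhdef, zero_smul, add_zero]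
  have hg1 : ‖y₁ + (1:ℝ) • y₂‖ ^ p = ‖y₁ + y₂‖ ^ p := by rw [one_smul]
  have hg0 : ‖y₁ + (0:ℝ) • y₂‖ ^ p = ‖y₁‖ ^ p := by simp
  have := hmono2
  rw [hconst, hsub, hFTC, hg1, hg0, h0val, hφ1] at this
  linarith
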